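/- Let 0 < ε < π. Then the first derivative of the infinite-order scaled kernel with range ε is expressed in terms of two translated copies of the infinite-order scaled kernel with range ε/2: for every real θ, (d/dθ) K̄_ε(θ) = (1/ε) · ( K̄_{ε/2}(θ + ε/2) − K̄_{ε/2}(θ − ε/2) ). -/

import Mathlib

/-- The sinc function: `sinc x = sin x / x` for `x ≠ 0` and `sinc 0 = 1`. -/
noncomputable def sinc (x : ℝ) : ℝ := if x = 0 then 1 else Real.sin x / x

/-- The Fourier coefficient `c_k(ε) = ∏_{n=1}^∞ sinc(kε/2^n)` of the
infinite-order scaled kernel. -/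
noncomputable def infKernelCoeff (ε : ℝ) (k : ℕ) : ℝ :=
  ∏' n : ℕ, sinc ((k : ℝ) * ε / 2 ^ (n + 1))

/-- The infinite-order scaled kernel with range `ε`:
`K̄_ε(θ) = 1/(2π) + (1/π) Σ_{k=1}^∞ c_k(ε) cos(kθ)`. -/
noncomputable def infKernel (ε : ℝ) (θ : ℝ) : ℝ :=
  1 / (2 * Real.pi) +
    (1 / Real.pi) * ∑' k : ℕ, infKernelCoeff ε (k + 1) * Real.cos ((k + 1 : ℝ) * θ)


open Real hiding sinc abs_sinc_le_one
open Filter Topology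

lemma abs_sinc_le_one (x : ℝ) : |sinc x| ≤ 1 := by
  unfold sinc
  split_ifs with h
  · simp
  · rw [abs_div, div_le_one (abs_pos.2 h)]
    exact Real.abs_sin_le_abs

lemma abs_sinc_le_inv {x : ℝ} (h : x ≠ 0) : |sinc x| ≤ 1 / |x| := by
  unfold sinc
  rw [if_neg h, abs_div]
  gcongr
  exact Real.abs_sin_le_one _

lemma sinc_lower {x : ℝ} (h0 : 0 < x) (h1 : x ≤ 1) : 1 - x^2/4 < sinc x := by
  unfold sinc
  rw [if_neg h0.ne', lt_div_iff₀ h0]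
  nlinarith [Real.sin_gt_sub_cube h0]

/-- Multipliability of the sinc product, small-argument case. -/
lemma multipliable_sinc_small {c : ℝ} (hc : 0 < c) (hc1 : c ≤ 1) :
    Multipliable (fun n : ℕ => sinc (c / 2 ^ (n + 1))) := by
  have hx0 : ∀ n : ℕ, 0 < c / 2 ^ (n + 1) := fun n => by positivity
  have hx1 : ∀ n : ℕ, c / 2 ^ (n + 1) ≤ 1 := by
    intro n
    apply div_le_one_of_le₀ (hc1.trans ?_) (by positivity)
    exact one_le_pow₀ (by norm_num)
  have hpos : ∀ n : ℕ, 0 < sinc (c / 2 ^ (n + 1)) := by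
    intro n
    have := sinc_lower (hx0 n) (hx1 n)
    nlinarith [hx1 n, (hx0 n).le]
  have hle1 : ∀ n : ℕ, sinc (c / 2 ^ (n + 1)) ≤ 1 := by
    intro n
    have := abs_sinc_le_one (c / 2 ^ (n + 1))
    exact (abs_le.1 this).2
  have hlog : Summable (fun n : ℕ => Real.log (sinc (c / 2 ^ (n + 1)))) := by
    apply Summable.of_norm_bounded (g := fun n : ℕ => (1 / 2 : ℝ) ^ n)
      (summable_geometric_of_lt_one (by norm_num) (by norm_num))
    intro n
    set x := c / 2 ^ (n + 1) with hxdef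
    have h0 := hx0 n
    have h1 := hx1 n
    have hp := hpos n
    have hl := hle1 n
    have hlow := sinc_lower h0 h1
    have hge : (3/4 : ℝ) ≤ sinc x := by nlinarith
    have hlognonpos : Real.log (sinc x) ≤ 0 := Real.log_nonpos (by linarith) hl
    rw [Real.norm_eq_abs, abs_of_nonpos hlognonpos]
    have hinv : -Real.log (sinc x) = Real.log (sinc x)⁻¹ := by
      rw [Real.log_inv]
    rw [hinv]
    have hbound : Real.log (sinc x)⁻¹ ≤ (sinc x)⁻¹ - 1 :=
      Real.log_le_sub_one_of_pos (by positivity)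
    have hinvle : (sinc x)⁻¹ ≤ 4/3 := by
      rw [inv_le_comm₀ hp (by norm_num)]
      linarith
    have hxsq : (sinc x)⁻¹ - 1 ≤ x ^ 2 / 3 := by
      have h2 : 1 - sinc x ≤ x ^ 2 / 4 := by linarith
      have : (sinc x)⁻¹ - 1 = (1 - sinc x) * (sinc x)⁻¹ := by
        field_simp
      rw [this]
      calc (1 - sinc x) * (sinc x)⁻¹ ≤ (x ^ 2 / 4) * (4/3) := by
            apply mul_le_mul h2 hinvle (by positivity) (by positivity)
        _ = x ^ 2 / 3 := by ring
    have hxle : x ≤ (1/2 : ℝ) ^ n := by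
      rw [hxdef, div_le_iff₀ (by positivity)]
      calc c ≤ 1 := hc1
        _ ≤ (1/2 : ℝ) ^ n * 2 ^ (n + 1) := by
            rw [pow_succ]
            rw [show (1/2 : ℝ) ^ n * (2 ^ n * 2) = ((1/2 : ℝ) * 2) ^ n * 2 by rw [mul_pow]; ring]
            norm_num
    calc Real.log (sinc x)⁻¹ ≤ x ^ 2 / 3 := hbound.trans hxsq
      _ ≤ x := by nlinarith
      _ ≤ (1/2 : ℝ) ^ n := hxle
  exact Real.multipliable_of_summable_log hpos hlog

/-- Multipliability of the sinc product, general case. -/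
lemma multipliable_sinc {c : ℝ} (hc : 0 < c) :
    Multipliable (fun n : ℕ => sinc (c / 2 ^ (n + 1))) := by
  obtain ⟨N, hN⟩ : ∃ N : ℕ, c ≤ 2 ^ N := by
    obtain ⟨N, hN⟩ := pow_unbounded_of_one_lt c (by norm_num : (1:ℝ) < 2)
    exact ⟨N, hN.le⟩
  have h1 : Multipliable (fun n : ℕ => sinc ((c / 2 ^ N) / 2 ^ (n + 1))) :=
    multipliable_sinc_small (by positivity) (div_le_one_of_le₀ hN (by positivity))
  have h2 : (fun n : ℕ => sinc ((c / 2 ^ N) / 2 ^ (n + 1)))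
      = fun n : ℕ => sinc (c / 2 ^ (n + N + 1)) := by
    funext n
    congr 1
    rw [div_div, ← pow_add]
    ring_nf
  rw [h2] at h1
  exact Multipliable.comp_nat_add (k := N) (h1.congr (fun n => by rw [add_right_comm]))

lemma multipliable_sinc_shift {c : ℝ} (hc : 0 < c) (N : ℕ) :
    Multipliable (fun n : ℕ => sinc (c / 2 ^ (n + N + 1))) := by
  have h1 := multipliable_sinc (c := c / 2 ^ N) (by positivity)
  exact h1.congr (fun n => by rw [div_div, ← pow_add]; ring_nf)

lemma abs_tprod_le_one {f : ℕ → ℝ} (hm : Multipliable f) (h : ∀ n, |f n| ≤ 1) :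
    |∏' n, f n| ≤ 1 := by
  obtain ⟨a, ha⟩ := hm
  rw [ha.tprod_eq]
  have ht : Tendsto (fun s : Finset ℕ => |∏ i ∈ s, f i|) atTop (𝓝 |a|) :=
    (continuous_abs.tendsto a).comp ha
  refine le_of_tendsto ht (Eventually.of_forall fun s => ?_)
  rw [Finset.abs_prod]
  exact Finset.prod_le_one (fun i _ => abs_nonneg _) (fun i _ => h i)

lemma coeff_abs_le {ε : ℝ} (hε : 0 < ε) (k : ℕ) :
    |infKernelCoeff ε (k + 1)| ≤ 64 / (ε ^ 3 * ((k : ℝ) + 1) ^ 3) := by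
  set c : ℝ := ((k : ℝ) + 1) * ε with hcdef
  have hc : 0 < c := by positivity
  have hcoeff : infKernelCoeff ε (k + 1) = ∏' n : ℕ, sinc (c / 2 ^ (n + 1)) := by
    unfold infKernelCoeff
    push_cast
    rfl
  set f : ℕ → ℝ := fun n => sinc (c / 2 ^ (n + 1)) with hfdef
  have hm3 : Multipliable (fun n : ℕ => f (n + 3)) := by
    have := multipliable_sinc_shift hc 3
    exact this.congr (fun n => rfl)
  have hsplit : ((∏ i ∈ Finset.range 3, f i) * ∏' i, f (i + 3)) = ∏' i, f i :=
    Multipliable.prod_mul_tprod_nat_mul' hm3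
  rw [hcoeff, ← hsplit, abs_mul]
  have htail : |∏' i, f (i + 3)| ≤ 1 :=
    abs_tprod_le_one hm3 (fun n => abs_sinc_le_one _)
  have hhead : |∏ i ∈ Finset.range 3, f i| ≤ 64 / c ^ 3 := by
    rw [Finset.abs_prod]
    have hb : ∀ i : ℕ, |f i| ≤ 2 ^ (i + 1) / c := by
      intro i
      have hne : c / 2 ^ (i + 1) ≠ 0 := by positivity
      have := abs_sinc_le_inv hne
      rwa [abs_of_pos (by positivity : (0:ℝ) < c / 2 ^ (i + 1)), one_div, inv_div] at this
    calc ∏ i ∈ Finset.range 3, |f i| ≤ ∏ i ∈ Finset.range 3, (2 ^ (i + 1) / c) := by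
          apply Finset.prod_le_prod (fun i _ => abs_nonneg _) (fun i _ => hb i)
      _ = 64 / c ^ 3 := by
          rw [Finset.prod_range_succ, Finset.prod_range_succ, Finset.prod_range_one]
          field_simp
          ring
    
  have heq : (64 / c ^ 3) * 1 = 64 / (ε ^ 3 * ((k : ℝ) + 1) ^ 3) := by
    rw [hcdef]; ring
  rw [← heq]
  exact mul_le_mul hhead htail (abs_nonneg _) (le_of_lt (div_pos (by norm_num) (pow_pos hc 3)))

lemma coeff_rec {ε : ℝ} (hε : 0 < ε) (k : ℕ) :
    infKernelCoeff ε (k + 1)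
      = sinc (((k : ℝ) + 1) * ε / 2) * infKernelCoeff (ε / 2) (k + 1) := by
  have hc : 0 < ((k : ℝ) + 1) * ε := by positivity
  have hcoeff : infKernelCoeff ε (k + 1)
      = ∏' n : ℕ, sinc (((k : ℝ) + 1) * ε / 2 ^ (n + 1)) := by
    unfold infKernelCoeff; push_cast; rfl
  have htail : Multipliable (fun n : ℕ => sinc (((k : ℝ) + 1) * ε / 2 ^ (n + 1 + 1))) :=
    (multipliable_sinc_shift hc 1).congr (fun n => rfl)
  rw [hcoeff, tprod_eq_zero_mul' (f := fun n => sinc (((k:ℝ)+1) * ε / 2 ^ (n+1))) htail]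
  congr 1
  · norm_num
  · unfold infKernelCoeff
    push_cast
    apply tprod_congr
    intro n
    congr 1
    rw [show ((k:ℝ)+1) * (ε/2) / 2 ^ (n+1) = ((k:ℝ)+1) * ε / (2 ^ (n+1) * 2) by ring]
    rw [pow_succ (2:ℝ) (n+1)]
    

lemma summable_inv_shift (p : ℕ) (hp : 1 < p) :
    Summable (fun k : ℕ => 1 / ((k : ℝ) + 1) ^ p) := by
  have h := (summable_one_div_nat_pow (p := p)).2 hp
  have h2 := (summable_nat_add_iff (f := fun n : ℕ => 1 / (n : ℝ) ^ p) 1).2 h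
  exact h2.congr (fun n => by push_cast; ring)

lemma summable_coeff_bound {ε : ℝ} (hε : 0 < ε) (p : ℕ) (hp : 1 < p) (C : ℝ) :
    Summable (fun k : ℕ => C / (ε ^ 3 * ((k : ℝ) + 1) ^ p)) := by
  have := (summable_inv_shift p hp).mul_left (C / ε ^ 3)
  exact this.congr (fun n => by rw [div_mul_div_comm, mul_one])

/-- For `0 < ε < π`, the first derivative of the infinite-order scaled
kernel with range `ε` is given by two translated copies of the kernel with range `ε/2`:
`(d/dθ) K̄_ε(θ) = (1/ε)·(K̄_{ε/2}(θ + ε/2) − K̄_{ε/2}(θ − ε/2))` for every real `θ`. -/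
theorem stmt_14 (ε : ℝ) (hε : 0 < ε) (hεπ : ε < Real.pi) (θ : ℝ) :
    HasDerivAt (infKernel ε)
      ((1 / ε) * (infKernel (ε / 2) (θ + ε / 2) - infKernel (ε / 2) (θ - ε / 2))) θ := by
  have hε2 : (0:ℝ) < ε / 2 := by linarith
  have hderiv : ∀ (k : ℕ) (y : ℝ),
      HasDerivAt (fun y => infKernelCoeff ε (k + 1) * Real.cos (((k : ℝ) + 1) * y))
        (infKernelCoeff ε (k + 1) * (-Real.sin (((k : ℝ) + 1) * y) * ((k : ℝ) + 1))) y := by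
    intro k y
    have h := (((hasDerivAt_id y).const_mul ((k : ℝ) + 1)).cos).const_mul
      (infKernelCoeff ε (k + 1))
    simpa using h
  have hbound : ∀ (k : ℕ) (y : ℝ),
      ‖infKernelCoeff ε (k + 1) * (-Real.sin (((k : ℝ) + 1) * y) * ((k : ℝ) + 1))‖
        ≤ 64 / (ε ^ 3 * ((k : ℝ) + 1) ^ 2) := by
    intro k y
    have hk : (0:ℝ) < (k : ℝ) + 1 := by positivity
    rw [Real.norm_eq_abs]
    simp only [abs_mul, abs_neg]
    calc |infKernelCoeff ε (k + 1)| * (|Real.sin (((k : ℝ) + 1) * y)| * |(k : ℝ) + 1|)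
        ≤ (64 / (ε ^ 3 * ((k : ℝ) + 1) ^ 3)) * (1 * ((k : ℝ) + 1)) := by
          rw [abs_of_pos hk]
          gcongr
          · exact coeff_abs_le hε k
          · exact Real.abs_sin_le_one _
      _ = 64 / (ε ^ 3 * ((k : ℝ) + 1) ^ 2) := by
          field_simp
  have hu : Summable (fun k : ℕ => 64 / (ε ^ 3 * ((k : ℝ) + 1) ^ 2)) :=
    summable_coeff_bound hε 2 one_lt_two 64
  have hg0 : Summable (fun k : ℕ => infKernelCoeff ε (k + 1) * Real.cos (((k : ℝ) + 1) * 0)) := by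
    apply Summable.of_norm_bounded (summable_coeff_bound hε 3 (by norm_num) 64)
    intro k
    rw [Real.norm_eq_abs, abs_mul]
    calc |infKernelCoeff ε (k + 1)| * |Real.cos (((k : ℝ) + 1) * 0)|
        ≤ (64 / (ε ^ 3 * ((k : ℝ) + 1) ^ 3)) * 1 := by
          gcongr
          · exact coeff_abs_le hε k
          · exact Real.abs_cos_le_one _
      _ = 64 / (ε ^ 3 * ((k : ℝ) + 1) ^ 3) := mul_one _
  have hD : HasDerivAt
      (fun y => ∑' k : ℕ, infKernelCoeff ε (k + 1) * Real.cos (((k : ℝ) + 1) * y))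
      (∑' k : ℕ, infKernelCoeff ε (k + 1) * (-Real.sin (((k : ℝ) + 1) * θ) * ((k : ℝ) + 1))) θ :=
    hasDerivAt_tsum hu hderiv hbound hg0 θ
  have hmain : HasDerivAt (infKernel ε)
      ((1 / Real.pi) * ∑' k : ℕ,
        infKernelCoeff ε (k + 1) * (-Real.sin (((k : ℝ) + 1) * θ) * ((k : ℝ) + 1))) θ :=
    (hD.const_mul _).const_add _
  convert hmain using 1
  -- summability of the two translated series
  have hdsum : ∀ y : ℝ, Summable (fun k : ℕ =>
      infKernelCoeff (ε / 2) (k + 1) * Real.cos (((k : ℝ) + 1) * y)) := by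
    intro y
    apply Summable.of_norm_bounded (summable_coeff_bound hε2 3 (by norm_num) 64)
    intro k
    rw [Real.norm_eq_abs, abs_mul]
    calc |infKernelCoeff (ε/2) (k + 1)| * |Real.cos (((k : ℝ) + 1) * y)|
        ≤ (64 / ((ε/2) ^ 3 * ((k : ℝ) + 1) ^ 3)) * 1 := by
          gcongr
          · exact coeff_abs_le hε2 k
          · exact Real.abs_cos_le_one _
      _ = 64 / ((ε/2) ^ 3 * ((k : ℝ) + 1) ^ 3) := mul_one _
  have h1 := hdsum (θ + ε / 2)
  have h2 := hdsum (θ - ε / 2)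
  -- per-term identity
  have hterm : ∀ k : ℕ,
      infKernelCoeff ε (k + 1) * (-Real.sin (((k : ℝ) + 1) * θ) * ((k : ℝ) + 1))
        = (1 / ε) * (infKernelCoeff (ε / 2) (k + 1) * Real.cos (((k : ℝ) + 1) * (θ + ε / 2))
            - infKernelCoeff (ε / 2) (k + 1) * Real.cos (((k : ℝ) + 1) * (θ - ε / 2))) := by
    intro k
    have hne : ((k : ℝ) + 1) * ε / 2 ≠ 0 := by positivity
    have harg1 : ((k : ℝ) + 1) * (θ + ε / 2) = ((k : ℝ) + 1) * θ + ((k : ℝ) + 1) * ε / 2 := by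
      ring
    have harg2 : ((k : ℝ) + 1) * (θ - ε / 2) = ((k : ℝ) + 1) * θ - ((k : ℝ) + 1) * ε / 2 := by
      ring
    rw [harg1, harg2, Real.cos_add, Real.cos_sub, coeff_rec hε k]
    unfold sinc
    rw [if_neg hne]
    field_simp
    ring
  have hS : (∑' k : ℕ, infKernelCoeff ε (k + 1) *
        (-Real.sin (((k : ℝ) + 1) * θ) * ((k : ℝ) + 1)))
      = (1 / ε) * ∑' k : ℕ,
          (infKernelCoeff (ε / 2) (k + 1) * Real.cos (((k : ℝ) + 1) * (θ + ε / 2))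
            - infKernelCoeff (ε / 2) (k + 1) * Real.cos (((k : ℝ) + 1) * (θ - ε / 2))) := by
    rw [← tsum_mul_left]
    exact tsum_congr hterm
  unfold infKernel
  rw [hS, Summable.tsum_sub h1 h2]
  ring
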